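/- Let H be the support function of an ellipsoid K = L(B) centered at the origin, with dual function H_*(x) = sup{⟨x,y⟩ : H(y)=1}. Then H_*(x) = |L⁻¹x|, and the function u(x) = (r² − H_*(x)²)/(2n) satisfies div(DV(Du)) = −1 on ℝⁿ, where V = (1/2)H². -/

import Mathlib

open InnerProductSpace ContinuousLinearMap

lemma aux_grad_sq {n : ℕ} (A : EuclideanSpace ℝ (Fin n) →L[ℝ] EuclideanSpace ℝ (Fin n))
    (x : EuclideanSpace ℝ (Fin n)) :
    HasGradientAt (fun y => (inner ℝ (A y) (A y) : ℝ))
      ((2:ℝ) • (ContinuousLinearMap.adjoint A) (A x)) x := by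
  have h := (A.hasFDerivAt (x := x)).inner ℝ (A.hasFDerivAt (x := x))
  rw [hasGradientAt_iff_hasFDerivAt]
  refine h.congr_fderiv ?_
  ext v
  simp [fderivInnerCLM_apply, InnerProductSpace.toDual_apply_apply, real_inner_smul_left,
    ContinuousLinearMap.adjoint_inner_left, real_inner_comm]
  rw [two_mul]

lemma aux_grad_affine {n : ℕ} {f : EuclideanSpace ℝ (Fin n) → ℝ}
    {g x : EuclideanSpace ℝ (Fin n)} (c d : ℝ) (hf : HasGradientAt f g x) :
    HasGradientAt (fun y => d + c * f y) (c • g) x := by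
  rw [hasGradientAt_iff_hasFDerivAt] at *
  have h := (hf.const_mul c).const_add d
  refine h.congr_fderiv ?_
  ext v
  simp [InnerProductSpace.toDual_apply_apply, real_inner_smul_left]

lemma aux_cancel {n : ℕ} (L : EuclideanSpace ℝ (Fin n) ≃L[ℝ] EuclideanSpace ℝ (Fin n))
    (w : EuclideanSpace ℝ (Fin n)) :
    ContinuousLinearMap.adjoint (L : EuclideanSpace ℝ (Fin n) →L[ℝ] EuclideanSpace ℝ (Fin n))
      (ContinuousLinearMap.adjoint
        (L.symm : EuclideanSpace ℝ (Fin n) →L[ℝ] EuclideanSpace ℝ (Fin n)) w) = w := by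
  have h : (ContinuousLinearMap.adjoint (L : EuclideanSpace ℝ (Fin n) →L[ℝ] _)).comp
      (ContinuousLinearMap.adjoint (L.symm : EuclideanSpace ℝ (Fin n) →L[ℝ] _)) =
      ContinuousLinearMap.id ℝ _ := by
    rw [← ContinuousLinearMap.adjoint_comp]
    have : (L.symm : EuclideanSpace ℝ (Fin n) →L[ℝ] _).comp
        (L : EuclideanSpace ℝ (Fin n) →L[ℝ] _) = ContinuousLinearMap.id ℝ _ := by
      ext z; simp
    rw [this, ContinuousLinearMap.adjoint_id]
  calc _ = ((ContinuousLinearMap.adjoint (L : EuclideanSpace ℝ (Fin n) →L[ℝ] _)).comp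
      (ContinuousLinearMap.adjoint (L.symm : EuclideanSpace ℝ (Fin n) →L[ℝ] _))) w := rfl
    _ = w := by rw [h]; rfl

theorem ellipsoid_dual_and_torsion_solution {n : ℕ} (hn : 0 < n)
    (L : EuclideanSpace ℝ (Fin n) ≃L[ℝ] EuclideanSpace ℝ (Fin n))
    (H Hs V : EuclideanSpace ℝ (Fin n) → ℝ)
    (hH : ∀ x, H x = ‖ContinuousLinearMap.adjoint
      (L : EuclideanSpace ℝ (Fin n) →L[ℝ] EuclideanSpace ℝ (Fin n)) x‖)
    (hHs : ∀ x, Hs x = sSup ((fun y => (inner ℝ x y : ℝ)) '' {y | H y = 1}))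
    (hV : ∀ x, V x = (1 / 2) * (H x) ^ 2)
    (r : ℝ) (hr : 0 < r)
    (u : EuclideanSpace ℝ (Fin n) → ℝ)
    (hu : ∀ x, u x = (r ^ 2 - (Hs x) ^ 2) / (2 * n)) :
    (∀ x, Hs x = ‖L.symm x‖) ∧
    (∀ x : EuclideanSpace ℝ (Fin n),
      ∑ i, (fderiv ℝ (fun y => gradient V (gradient u y)) x
        (EuclideanSpace.single i 1)) i = -1) := by
  have hEnotation : True := trivial
  set A : EuclideanSpace ℝ (Fin n) →L[ℝ] EuclideanSpace ℝ (Fin n) :=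
    (L.symm : EuclideanSpace ℝ (Fin n) →L[ℝ] EuclideanSpace ℝ (Fin n)) with hA
  set B : EuclideanSpace ℝ (Fin n) →L[ℝ] EuclideanSpace ℝ (Fin n) :=
    ContinuousLinearMap.adjoint
      (L : EuclideanSpace ℝ (Fin n) →L[ℝ] EuclideanSpace ℝ (Fin n)) with hB
  -- Part 1
  have part1 : ∀ x, Hs x = ‖L.symm x‖ := by
    intro x
    rw [hHs]
    set v : EuclideanSpace ℝ (Fin n) := L.symm x with hv
    have key : ∀ y : EuclideanSpace ℝ (Fin n), (inner ℝ x y : ℝ) = inner ℝ v (B y) := by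
      intro y
      rw [hB, ContinuousLinearMap.adjoint_inner_right]
      simp [hv]
    -- choose a unit vector w with ⟪v, w⟫ = ‖v‖
    obtain ⟨w, hw1, hw2⟩ : ∃ w : EuclideanSpace ℝ (Fin n), ‖w‖ = 1 ∧ (inner ℝ v w : ℝ) = ‖v‖ := by
      by_cases hv0 : v = 0
      · refine ⟨EuclideanSpace.single ⟨0, hn⟩ 1, ?_, by simp [hv0]⟩
        simp [EuclideanSpace.norm_single]
      · refine ⟨‖v‖⁻¹ • v, ?_, ?_⟩
        · rw [norm_smul, norm_inv, norm_norm, inv_mul_cancel₀ (norm_ne_zero_iff.2 hv0)]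
        · rw [real_inner_smul_right, real_inner_self_eq_norm_sq, sq,
            inv_mul_cancel_left₀ (norm_ne_zero_iff.2 hv0)]
    apply IsGreatest.csSup_eq
    constructor
    · refine ⟨ContinuousLinearMap.adjoint A w, ?_, ?_⟩
      · show H _ = 1
        rw [hH]
        have : B (ContinuousLinearMap.adjoint A w) = w := aux_cancel L w
        rw [show B (ContinuousLinearMap.adjoint A w) = w from this, hw1]
      · show (inner ℝ x (ContinuousLinearMap.adjoint A w) : ℝ) = ‖v‖
        rw [key, aux_cancel L w, hw2]
    · rintro a ⟨y, hy, rfl⟩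
      have hy' : ‖B y‖ = 1 := by rw [hB, ← hH]; exact hy
      calc (inner ℝ x y : ℝ) = inner ℝ v (B y) := key y
        _ ≤ ‖v‖ * ‖B y‖ := real_inner_le_norm v (B y)
        _ = ‖v‖ := by rw [hy', mul_one]
  refine ⟨part1, ?_⟩
  -- Part 2
  have hn' : (n : ℝ) ≠ 0 := Nat.cast_ne_zero.2 hn.ne'
  -- rewrite u and V as explicit quadratics
  have hu' : u = fun y => r ^ 2 / (2 * n) + (-(1 / (2 * n))) * (inner ℝ (A y) (A y) : ℝ) := by
    funext y
    rw [hu, part1, show (inner ℝ (A y) (A y) : ℝ) = ‖A y‖ ^ 2 from real_inner_self_eq_norm_sq _,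
      show ‖(A y : EuclideanSpace ℝ (Fin n))‖ = ‖L.symm y‖ from rfl]
    field_simp
    ring
  have hV' : V = fun y => 0 + (1 / 2) * (inner ℝ (B y) (B y) : ℝ) := by
    funext y
    rw [hV, hH, show (inner ℝ (B y) (B y) : ℝ) = ‖B y‖ ^ 2 from real_inner_self_eq_norm_sq _, hB]
    ring
  have hgu : gradient u = fun x => (-(1 / (2 * n)) : ℝ) •
      ((2:ℝ) • (ContinuousLinearMap.adjoint A) (A x)) := by
    rw [hu']
    exact gradient_eq fun x => aux_grad_affine _ _ (aux_grad_sq A x)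
  have hgV : gradient V = fun x => ((1:ℝ) / 2) •
      ((2:ℝ) • (ContinuousLinearMap.adjoint B) (B x)) := by
    rw [hV']
    exact gradient_eq fun x => aux_grad_affine _ _ (aux_grad_sq B x)
  have hcomp : (fun y => gradient V (gradient u y)) = fun y => (-(1 / n) : ℝ) • y := by
    funext y
    rw [hgu, hgV]
    have hBA : ∀ z : EuclideanSpace ℝ (Fin n), B (ContinuousLinearMap.adjoint A z) = z := fun z => aux_cancel L z
    have hadjB : ContinuousLinearMap.adjoint B = (L : EuclideanSpace ℝ (Fin n) →L[ℝ] EuclideanSpace ℝ (Fin n)) := by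
      rw [hB, ContinuousLinearMap.adjoint_adjoint]
    simp only [map_smul, hBA, hadjB]
    rw [smul_smul, smul_smul, smul_smul]
    have : ((L : EuclideanSpace ℝ (Fin n) →L[ℝ] EuclideanSpace ℝ (Fin n))) (A y) = y := by simp [hA]
    rw [this]
    congr 1
    field_simp
  intro x
  rw [hcomp]
  have hfd : HasFDerivAt (fun y : EuclideanSpace ℝ (Fin n) => (-(1 / n) : ℝ) • y)
      ((-(1 / n) : ℝ) • ContinuousLinearMap.id ℝ (EuclideanSpace ℝ (Fin n))) x := (hasFDerivAt_id x).const_smul (-(1 / n) : ℝ)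
  rw [hfd.fderiv]
  have : ∀ i : Fin n, (((-(1 / n) : ℝ) • ContinuousLinearMap.id ℝ (EuclideanSpace ℝ (Fin n)))
      (EuclideanSpace.single i 1)) i = -(1 / n) := by
    intro i
    simp [EuclideanSpace.single_apply]
  rw [Finset.sum_congr rfl fun i _ => this i]
  simp [Finset.sum_const, hn']
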